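/- Let a < b be real numbers, let f : ℝ → ℝ be continuously differentiable on [a,b], and let α₀ ∈ (0,1). If D^α_{*a} f(t) ≥ 0 for all t ∈ [a,b] and all α ∈ (α₀, 1), then in fact D^α_{*a} f(t) ≥ 0 for all t ∈ [a,b] and all α ∈ (0, 1). -/

import Mathlib

open Set MeasureTheory intervalIntegral Real

/-- The Caputo fractional derivative of order `α` with starting point `a`:
`D^α_{*a} f(t) = (1/Γ(1-α)) ∫_a^t (t-s)^(-α) f'(s) ds`. -/
noncomputable def caputoDeriv (a α : ℝ) (f : ℝ → ℝ) (t : ℝ) : ℝ :=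
  (Real.Gamma (1 - α))⁻¹ * ∫ s in a..t, (t - s) ^ (-α) * deriv f s

lemma aux_rpow_intble (c d α : ℝ) (hα1 : α < 1) :
    IntervalIntegrable (fun s : ℝ => (d - s) ^ (-α)) volume c d := by
  have h := (intervalIntegral.intervalIntegrable_rpow' (a := d - c) (b := 0)
    (r := -α) (by linarith)).comp_sub_left d
  simpa using h

lemma caputo_key (a c d α ε M : ℝ) (g : ℝ → ℝ)
    (hac : a ≤ c) (hcd : c < d) (hα : 0 < α) (hα1 : α < 1)
    (hcont : ContinuousOn g (Icc a d))
    (hMg : ∀ s ∈ Icc a c, g s ≤ M) (hM0 : 0 ≤ M)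
    (hε : ∀ s ∈ Icc c d, g s ≤ -ε) (hε0 : 0 < ε)
    (hsmall : M * (c - a) < ε * (d - c) / (1 - α)) :
    (∫ s in a..d, (d - s) ^ (-α) * g s) < 0 := by
  have hdc : 0 < d - c := by linarith
  have h1α : 0 < 1 - α := by linarith
  have hP : 0 < (d - c) ^ (-α) := Real.rpow_pos_of_pos hdc _
  -- integrability on [a,c]
  have hrc : ContinuousOn (fun s : ℝ => (d - s) ^ (-α)) (Icc a c) := by
    apply (continuousOn_const.sub continuousOn_id).rpow_const
    intro x hx
    left
    have : x ≤ c := hx.2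
    show d - x ≠ 0
    intro hh
    nlinarith
  have int1 : IntervalIntegrable (fun s : ℝ => (d - s) ^ (-α) * g s) volume a c := by
    apply ContinuousOn.intervalIntegrable
    rw [uIcc_of_le hac]
    exact hrc.mul (hcont.mono (Icc_subset_Icc le_rfl hcd.le))
  have int2 : IntervalIntegrable (fun s : ℝ => (d - s) ^ (-α) * g s) volume c d :=
    (aux_rpow_intble c d α hα1).mul_continuousOn
      (by rw [uIcc_of_le hcd.le]; exact hcont.mono (Icc_subset_Icc hac le_rfl))
  rw [← integral_add_adjacent_intervals int1 int2]
  -- first piece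
  have bound1 : (∫ s in a..c, (d - s) ^ (-α) * g s) ≤ (d - c) ^ (-α) * ((c - a) * M) := by
    have := intervalIntegral.integral_mono_on (μ := volume) hac int1
      intervalIntegrable_const (g := fun _ : ℝ => (d - c) ^ (-α) * M) ?_
    · simpa using this
    · intro x hx
      have hxd : (0:ℝ) ≤ d - x := by have := hx.2; linarith
      calc (d - x) ^ (-α) * g x ≤ (d - x) ^ (-α) * M :=
            mul_le_mul_of_nonneg_left (hMg x hx) (Real.rpow_nonneg hxd _)
        _ ≤ (d - c) ^ (-α) * M := by
            apply mul_le_mul_of_nonneg_right _ hM0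
            exact Real.rpow_le_rpow_of_nonpos hdc (by linarith [hx.2]) (by linarith)
  -- second piece
  have bound2 : (∫ s in c..d, (d - s) ^ (-α) * g s) ≤
      (∫ s in c..d, (d - s) ^ (-α)) * (-ε) := by
    rw [← intervalIntegral.integral_mul_const]
    apply intervalIntegral.integral_mono_on hcd.le int2
      ((aux_rpow_intble c d α hα1).mul_const _)
    intro x hx
    have hxd : (0:ℝ) ≤ d - x := by have := hx.2; linarith
    exact mul_le_mul_of_nonneg_left (hε x hx) (Real.rpow_nonneg hxd _)
  have hval : (∫ s in c..d, (d - s) ^ (-α)) = (d - c) ^ (1 - α) / (1 - α) := by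
    have h1 := intervalIntegral.integral_comp_sub_left (a := c) (b := d)
      (fun u : ℝ => u ^ (-α)) d
    rw [h1, sub_self]
    rw [integral_rpow (Or.inl (by linarith : (-1:ℝ) < -α))]
    rw [Real.zero_rpow (by linarith : -α + 1 ≠ 0)]
    norm_num
    ring_nf
  have hpow : (d - c) ^ (1 - α) = (d - c) ^ (-α) * (d - c) := by
    rw [show (1 - α) = -α + 1 by ring, Real.rpow_add hdc, Real.rpow_one]
  have hneg : M * (c - a) - ε * (d - c) / (1 - α) < 0 := by linarith
  have key := mul_neg_of_pos_of_neg hP hneg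
  rw [hval, hpow] at bound2
  have hca : 0 ≤ c - a := by linarith
  calc (∫ s in a..c, (d - s) ^ (-α) * g s) + (∫ s in c..d, (d - s) ^ (-α) * g s)
      ≤ (d - c) ^ (-α) * ((c - a) * M) + (d - c) ^ (-α) * (d - c) / (1 - α) * (-ε) :=
        add_le_add bound1 bound2
    _ = (d - c) ^ (-α) * (M * (c - a) - ε * (d - c) / (1 - α)) := by ring
    _ < 0 := key

theorem caputo_nonneg_extend (a b : ℝ) (hab : a < b) (f : ℝ → ℝ)
    (hf : ContDiffOn ℝ 1 f (Set.Icc a b))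
    (α₀ : ℝ) (hα₀ : α₀ ∈ Set.Ioo (0 : ℝ) 1)
    (h : ∀ t ∈ Set.Icc a b, ∀ α ∈ Set.Ioo α₀ 1, 0 ≤ caputoDeriv a α f t) :
    ∀ t ∈ Set.Icc a b, ∀ α ∈ Set.Ioo (0 : ℝ) 1, 0 ≤ caputoDeriv a α f t := by
  set g : ℝ → ℝ := derivWithin f (Icc a b) with hg
  have hgc : ContinuousOn g (Icc a b) :=
    hf.continuousOn_derivWithin (uniqueDiffOn_Icc hab) le_rfl
  have hagree : ∀ s ∈ Ioo a b, g s = deriv f s := fun s hs =>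
    derivWithin_of_mem_nhds (Icc_mem_nhds hs.1 hs.2)
  obtain ⟨C, hC⟩ := isCompact_Icc.exists_bound_of_continuousOn hgc
  set M : ℝ := max C 0 with hM
  have hM0 : 0 ≤ M := le_max_right _ _
  have hMg : ∀ s ∈ Icc a b, g s ≤ M := fun s hs =>
    le_trans (le_trans (le_abs_self _) (hC s hs)) (le_max_left _ _)
  -- Main claim : g is nonnegative on (a,b)
  have hpos : ∀ s ∈ Ioo a b, 0 ≤ g s := by
    by_contra hcon
    push_neg at hcon
    obtain ⟨s₀, hs₀, hneg⟩ := hcon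
    set ε : ℝ := -g s₀ / 2 with hεdef
    have hε0 : 0 < ε := by simp only [hεdef]; linarith
    have hca : ContinuousAt g s₀ :=
      (hgc s₀ (Ioo_subset_Icc_self hs₀)).continuousAt (Icc_mem_nhds hs₀.1 hs₀.2)
    obtain ⟨δ, hδ0, hδ⟩ := Metric.continuousAt_iff.mp hca ε hε0
    set c : ℝ := max (s₀ - δ/2) ((a + s₀)/2) with hcdef
    set d : ℝ := min (s₀ + δ/2) ((s₀ + b)/2) with hddef
    have hac : a < c := lt_max_of_lt_right (by linarith [hs₀.1])
    have hcs : c < s₀ := max_lt (by linarith) (by linarith [hs₀.1])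
    have hsd : s₀ < d := lt_min (by linarith) (by linarith [hs₀.2])
    have hdb : d < b := min_lt_of_right_lt (by linarith [hs₀.2])
    have hcd : c < d := hcs.trans hsd
    have hεbound : ∀ s ∈ Icc c d, g s ≤ -ε := by
      intro s hs
      have h1 : s₀ - δ/2 ≤ s := le_trans (le_max_left _ _) hs.1
      have h2 : s ≤ s₀ + δ/2 := le_trans hs.2 (min_le_left _ _)
      have hdist : dist s s₀ < δ := by
        rw [Real.dist_eq, abs_sub_lt_iff]; constructor <;> linarith
      have := hδ hdist
      rw [Real.dist_eq, abs_sub_lt_iff] at this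
      have hgs0 : g s₀ = -2 * ε := by simp only [hεdef]; ring
      linarith [this.1]
    -- choose α
    set δ' : ℝ := min ((1 - α₀)/2) (ε * (d - c) / (2 * (M * (c - a) + 1))) with hδ'def
    have hMca : 0 < M * (c - a) + 1 := by nlinarith [hM0, hac]
    have hδ'0 : 0 < δ' := lt_min (by linarith [hα₀.2])
      (div_pos (mul_pos hε0 (by linarith)) (by linarith))
    set α : ℝ := 1 - δ' with hαdef
    have hα1 : α < 1 := by simp only [hαdef]; linarith
    have hαα₀ : α₀ < α := by
      have := min_le_left ((1 - α₀)/2) (ε * (d - c) / (2 * (M * (c - a) + 1)))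
      simp only [hαdef]; linarith [hα₀.2]
    have hα0 : 0 < α := lt_trans hα₀.1 hαα₀
    have hsmall : M * (c - a) < ε * (d - c) / (1 - α) := by
      have h1 : (1 : ℝ) - α = δ' := by simp [hαdef]
      rw [h1]
      have h2 : δ' ≤ ε * (d - c) / (2 * (M * (c - a) + 1)) := min_le_right _ _
      have h3 : ε * (d - c) / δ' ≥ ε * (d - c) / (ε * (d - c) / (2 * (M * (c - a) + 1))) := by
        apply div_le_div_of_nonneg_left (le_of_lt (mul_pos hε0 (by linarith))) hδ'0 h2
      have hne : ε * (d - c) ≠ 0 := ne_of_gt (mul_pos hε0 (by linarith))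
      have h4 : ε * (d - c) / (ε * (d - c) / (2 * (M * (c - a) + 1))) =
          2 * (M * (c - a) + 1) := by
        rw [div_div_eq_mul_div, mul_comm (ε * (d - c)), mul_div_assoc, div_self hne, mul_one]
      rw [h4] at h3
      linarith
    -- transfer to caputoDeriv and contradict
    have hd_mem : d ∈ Icc a b := ⟨le_of_lt (hac.trans hcd), hdb.le⟩
    have hnn := h d hd_mem α ⟨hαα₀, hα1⟩
    have hint_eq : (∫ s in a..d, (d - s) ^ (-α) * deriv f s) =
        ∫ s in a..d, (d - s) ^ (-α) * g s := by
      have had : a ≤ d := hd_mem.1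
      rw [intervalIntegral.integral_of_le had, intervalIntegral.integral_of_le had]
      apply setIntegral_congr_fun measurableSet_Ioc
      intro s hs
      have : s ∈ Ioo a b := ⟨hs.1, lt_of_le_of_lt hs.2 hdb⟩
      simp only [hagree s this]
    have hkey : (∫ s in a..d, (d - s) ^ (-α) * g s) < 0 := by
      apply caputo_key a c d α ε M g hac.le hcd hα0 hα1
        (hgc.mono (Icc_subset_Icc le_rfl hdb.le))
        (fun s hs => hMg s ⟨hs.1, le_trans hs.2 (by linarith)⟩) hM0 hεbound hε0 hsmall
    have hΓ : 0 < (Real.Gamma (1 - α))⁻¹ :=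
      inv_pos.mpr (Real.Gamma_pos_of_pos (by linarith))
    have : caputoDeriv a α f d < 0 := by
      rw [caputoDeriv, hint_eq]
      exact mul_neg_of_pos_of_neg hΓ hkey
    linarith
  -- conclude
  intro t ht α hα
  rw [caputoDeriv]
  apply mul_nonneg (le_of_lt (inv_pos.mpr (Real.Gamma_pos_of_pos (by linarith [hα.2]))))
  rw [intervalIntegral.integral_of_le ht.1]
  apply setIntegral_nonneg measurableSet_Ioc
  intro s hs
  rcases eq_or_lt_of_le hs.2 with heq | hlt
  · rw [heq, sub_self, Real.zero_rpow (by linarith [hα.1] : -α ≠ 0), zero_mul]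
  · have hs' : s ∈ Ioo a b := ⟨hs.1, lt_of_lt_of_le hlt ht.2⟩
    apply mul_nonneg (Real.rpow_nonneg (by linarith) _)
    rw [← hagree s hs']
    exact hpos s hs'
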